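/- In a finite tournament, the Smith set always exists and is unique: the family of nonempty dominant sets (sets S with every member of S beating every non-member) is totally ordered by inclusion, hence has a unique minimal element. -/

import Mathlib

/-- A dominant set of a tournament: a nonempty set each of whose members beats every
non-member. -/
def Dominant {V : Type*} (r : V → V → Prop) (S : Set V) : Prop :=
  S.Nonempty ∧ ∀ s ∈ S, ∀ v, v ∉ S → r s v

/-- In a finite tournament, the family of dominant sets is totally ordered by inclusion,
hence there is a unique minimal dominant set: the Smith set exists and is unique. -/
theorem smith_set_exists_unique
    {V : Type*} [Fintype V] [Nonempty V] (r : V → V → Prop)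
    (hirr : ∀ u, ¬ r u u)
    (htour : ∀ u v, u ≠ v → (r u v ↔ ¬ r v u)) :
    (∀ S T : Set V, Dominant r S → Dominant r T → S ⊆ T ∨ T ⊆ S) ∧
    (∃! S : Set V, Dominant r S ∧ ∀ T : Set V, Dominant r T → S ⊆ T) := by
  have hcomp : ∀ S T : Set V, Dominant r S → Dominant r T → S ⊆ T ∨ T ⊆ S := by
    intro S T hS hT
    by_contra h
    push_neg at h
    obtain ⟨s, hsS, hsT⟩ := Set.not_subset.mp h.1
    obtain ⟨t, htT, htS⟩ := Set.not_subset.mp h.2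
    have hne : s ≠ t := fun he => hsT (he ▸ htT)
    have h1 : r s t := hS.2 s hsS t htS
    have h2 : r t s := hT.2 t htT s hsT
    exact ((htour s t hne).mp h1) h2
  refine ⟨hcomp, ?_⟩
  have hfin : {S : Set V | Dominant r S}.Finite := Set.toFinite _
  have hne : {S : Set V | Dominant r S}.Nonempty := by
    refine ⟨Set.univ, Set.univ_nonempty, ?_⟩
    intro s _ v hv; exact absurd (Set.mem_univ v) hv
  obtain ⟨S, hS, hmin⟩ : ∃ S ∈ {S : Set V | Dominant r S}, ∀ T ∈ {S : Set V | Dominant r S},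
      id T ≤ id S → id S = id T := by
    obtain ⟨S, hS, hm⟩ := Set.Finite.exists_minimal hfin hne
    exact ⟨S, hS, fun T hT h => le_antisymm (hm hT h) h⟩
  refine ⟨S, ⟨hS, ?_⟩, ?_⟩
  · intro T hT
    rcases hcomp S T hS hT with h | h
    · exact h
    · exact le_of_eq (hmin T hT h)
  · rintro T ⟨hT, hTmin⟩
    exact Set.Subset.antisymm (hTmin S hS) (by
      rcases hcomp S T hS hT with h | h
      · exact h
      · exact le_of_eq (hmin T hT h))
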